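/- Let d ≥ 4 be even, l = d/2, and 0 < ε < (3e)⁻². Let F_ε(X,Y) = (X^l − (εY)^l)((εX)^l − Y^l) and V(F_ε) be the area of {(x,y) ∈ ℝ² : |F_ε(x,y)| ≤ 1}. Then V(F_ε) > (−log ε)/12. -/

import Mathlib

open scoped BigOperators
open MeasureTheory

set_option maxHeartbeats 1000000

/-- Let `d ≥ 4` be even, `l = d/2`, and `0 < ε < (3e)⁻²`.  Let
`F_ε(X,Y) = (X^l − (εY)^l)((εX)^l − Y^l)` and let `V(F_ε)` be the area of
`{(x,y) ∈ ℝ² : |F_ε(x,y)| ≤ 1}`.  Then `V(F_ε) > (−log ε)/12`. -/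
theorem Feps_volume_lower (d l : ℕ) (hd : 4 ≤ d) (hdl : d = 2 * l)
    (ε : ℝ) (hε0 : 0 < ε) (hε : ε < ((3 * Real.exp 1) ^ 2)⁻¹) :
    ENNReal.ofReal (-Real.log ε / 12)
      < volume {p : ℝ × ℝ |
          |(p.1 ^ l - (ε * p.2) ^ l) * ((ε * p.1) ^ l - p.2 ^ l)| ≤ 1} := by
  have he : (0:ℝ) < Real.exp 1 := Real.exp_pos 1
  have hε1 : ε < 9⁻¹ := by
    have h1 : (1:ℝ) < Real.exp 1 := by
      have := Real.add_one_le_exp (1:ℝ); linarith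
    have : (9:ℝ) < (3 * Real.exp 1) ^ 2 := by nlinarith
    calc ε < ((3 * Real.exp 1) ^ 2)⁻¹ := hε
      _ < 9⁻¹ := by
        apply inv_strictAnti₀ <;> nlinarith
  set M : ℝ := Real.sqrt (3 * ε)⁻¹ with hMdef
  have h3ε : (0:ℝ) < 3 * ε := by linarith
  have h3εlt : (3:ℝ) * ε < 1 := by linarith
  have hinv1 : (1:ℝ) < (3 * ε)⁻¹ := (one_lt_inv₀ h3ε).2 h3εlt
  have hM1 : (1:ℝ) < M := by
    rw [hMdef, show (1:ℝ) = Real.sqrt 1 from (Real.sqrt_one).symm]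
    exact Real.sqrt_lt_sqrt (by norm_num) hinv1
  have hMsq : M ^ 2 = (3 * ε)⁻¹ := Real.sq_sqrt (le_of_lt (by positivity))
  have hM0 : (0:ℝ) < M := lt_trans one_pos hM1
  -- the region
  set f : ℝ → ℝ := fun y => ε * y with hf
  set g : ℝ → ℝ := fun y => (3 * y)⁻¹ with hg
  set s : Set ℝ := Set.Ioc 1 M with hs
  have hMc : 3 * ε * (3 * ε)⁻¹ = 1 := mul_inv_cancel₀ h3ε.ne'
  have hfg : ∀ y ∈ s, f y ≤ g y := by
    intro y hy
    have hy1 : (1:ℝ) < y := hy.1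
    have hyM : y ≤ M := hy.2
    have hy0 : (0:ℝ) < y := lt_trans one_pos hy1
    show ε * y ≤ (3 * y)⁻¹
    rw [inv_eq_one_div, le_div_iff₀ (by positivity)]
    have h1 : 3 * ε * y ^ 2 ≤ 3 * ε * M ^ 2 :=
      mul_le_mul_of_nonneg_left (pow_le_pow_left₀ hy0.le hyM 2) h3ε.le
    have h2 : 3 * ε * M ^ 2 = 1 := by rw [hMsq]; exact hMc
    nlinarith [h1, h2]
  have hfc : IntegrableOn f s := by
    apply (Continuous.integrableOn_Icc (by fun_prop)).mono_set Set.Ioc_subset_Icc_self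
  have hgc : IntegrableOn g s := by
    have : ContinuousOn g (Set.Icc 1 M) := by
      apply ContinuousOn.inv₀ (by fun_prop)
      intro y hy
      have : (1:ℝ) ≤ y := hy.1
      positivity
    exact (this.integrableOn_Icc).mono_set Set.Ioc_subset_Icc_self
  have hsm : MeasurableSet s := measurableSet_Ioc
  have hvol : volume (regionBetween f g s)
      = ENNReal.ofReal (∫ y in s, (g y - f y)) :=
    volume_regionBetween_eq_integral hfc hgc hsm hfg
  -- compute the integral
  have hInt : (∫ y in s, (g y - f y))
      = -(Real.log 3 + Real.log ε) / 6 - 1/6 + ε/2 := by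
    rw [hs, ← intervalIntegral.integral_of_le hM1.le]
    have h0 : (0:ℝ) ∉ Set.uIcc 1 M := by
      rw [Set.uIcc_of_le hM1.le]
      intro h
      exact absurd h.1 (by norm_num)
    have hI1 : IntervalIntegrable (fun y : ℝ => (3:ℝ)⁻¹ * y⁻¹) volume 1 M := by
      apply IntervalIntegrable.const_mul
      exact intervalIntegral.intervalIntegrable_inv (fun x hx => by
        intro h; exact absurd (h ▸ hx) h0) (by fun_prop)
    have hI2 : IntervalIntegrable (fun y : ℝ => ε * y) volume 1 M :=
      (continuous_const.mul continuous_id).intervalIntegrable 1 M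
    have heq : ∀ y : ℝ, g y - f y = (3:ℝ)⁻¹ * y⁻¹ - ε * y := by
      intro y
      show (3 * y)⁻¹ - ε * y = (3:ℝ)⁻¹ * y⁻¹ - ε * y
      rw [mul_inv]
    simp_rw [heq]
    rw [intervalIntegral.integral_sub hI1 hI2,
      intervalIntegral.integral_const_mul, intervalIntegral.integral_const_mul,
      integral_inv h0, integral_id]
    rw [div_one, hMdef, Real.log_sqrt (by positivity),
      Real.sq_sqrt (le_of_lt (by positivity : (0:ℝ) < (3 * ε)⁻¹)),
      Real.log_inv, Real.log_mul (by norm_num) hε0.ne']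
    field_simp
    ring
  -- the arithmetic inequality
  have hlog : Real.log ε < -(2 * Real.log 3 + 2) := by
    have := Real.log_lt_log hε0 hε
    rw [Real.log_inv, Real.log_pow, Real.log_mul (by norm_num) he.ne',
      Real.log_exp] at this
    push_cast at this
    linarith
  have hkey : -Real.log ε / 12 < -(Real.log 3 + Real.log ε) / 6 - 1/6 + ε/2 := by
    have h3 : Real.log 3 = Real.log 3 := rfl
    nlinarith [hlog, hε0]
  -- inclusion of the swapped region
  set R : Set (ℝ × ℝ) := regionBetween f g s with hR
  have hRm : MeasurableSet R := measurableSet_regionBetween (by fun_prop)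
    (Measurable.inv (by fun_prop)) hsm
  have hsub : Prod.swap ⁻¹' R ⊆ {p : ℝ × ℝ |
      |(p.1 ^ l - (ε * p.2) ^ l) * ((ε * p.1) ^ l - p.2 ^ l)| ≤ 1} := by
    rintro ⟨x, y⟩ hp
    simp only [Set.mem_preimage, Prod.swap_prod_mk, hR, regionBetween,
      Set.mem_setOf_eq] at hp
    obtain ⟨hys, hx⟩ := hp
    have hy1 : (1:ℝ) < y := hys.1
    have hy0 : (0:ℝ) < y := lt_trans one_pos hy1
    have hεy : ε * y < x := hx.1
    have hxub : x < (3 * y)⁻¹ := hx.2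
    have hx0 : (0:ℝ) < x := lt_trans (by positivity) hεy
    have hxy : x * y ≤ 1 := by
      have : x * y < (3 * y)⁻¹ * y := by nlinarith
      have h2 : (3 * y)⁻¹ * y = 3⁻¹ := by field_simp
      nlinarith [this, h2]
    have hεx : ε * x ≤ y := by
      have : ε * x < ε * (3 * y)⁻¹ := by nlinarith
      have h2 : ε * (3 * y)⁻¹ ≤ 1 := by
        rw [mul_inv]
        have : ε * (3⁻¹ * y⁻¹) ≤ 1 * (1 * 1) := by
          apply mul_le_mul (by linarith) _ (by positivity) (by norm_num)
          apply mul_le_mul (by norm_num) _ (by positivity) (by norm_num)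
          rw [inv_le_one_iff₀]; right; linarith
        linarith [this]
      linarith
    simp only [Set.mem_setOf_eq]
    have hb1 : |x ^ l - (ε * y) ^ l| ≤ x ^ l := by
      rw [abs_sub_le_iff]
      constructor
      · nlinarith [pow_nonneg (by positivity : (0:ℝ) ≤ ε * y) l]
      · have h1 : (ε * y) ^ l ≤ x ^ l := pow_le_pow_left₀ (by positivity) hεy.le l
        nlinarith [pow_nonneg hx0.le l]
    have hb2 : |(ε * x) ^ l - y ^ l| ≤ y ^ l := by
      rw [abs_sub_le_iff]
      constructor
      · have h1 : (ε * x) ^ l ≤ y ^ l := pow_le_pow_left₀ (by positivity) hεx l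
        nlinarith [pow_nonneg hy0.le l]
      · nlinarith [pow_nonneg (by positivity : (0:ℝ) ≤ ε * x) l]
    calc |(x ^ l - (ε * y) ^ l) * ((ε * x) ^ l - y ^ l)|
        = |x ^ l - (ε * y) ^ l| * |(ε * x) ^ l - y ^ l| := abs_mul _ _
      _ ≤ x ^ l * y ^ l := by
          apply mul_le_mul hb1 hb2 (abs_nonneg _) (pow_nonneg hx0.le l)
      _ = (x * y) ^ l := (mul_pow x y l).symm
      _ ≤ 1 := pow_le_one₀ (by positivity) hxy
  -- put it together
  have hswapvol : volume (Prod.swap ⁻¹' R) = volume R := by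
    rw [Measure.volume_eq_prod]
    exact Measure.measurePreserving_swap.measure_preimage
      hRm.nullMeasurableSet
  calc ENNReal.ofReal (-Real.log ε / 12)
      < ENNReal.ofReal (∫ y in s, (g y - f y)) := by
        rw [ENNReal.ofReal_lt_ofReal_iff (by rw [hInt]; nlinarith [hkey, hlog, hε0, Real.log_nonneg (show (1:ℝ) ≤ 3 by norm_num)])]
        rw [hInt]; exact hkey
    _ = volume R := hvol.symm
    _ = volume (Prod.swap ⁻¹' R) := hswapvol.symm
    _ ≤ _ := measure_mono hsub
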